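/- Let X be an ordered real Banach space whose positive cone is closed, generating, and normal, and let Y be a real normed space. Then each of the following sets of linear operators from X to Y is a linear subspace of the space L(X,Y) of bounded operators that is closed in the operator norm: the Lebesgue operators, the σ-Lebesgue operators, the w-Lebesgue operators, the σ-w-Lebesgue operators, the order-to-norm continuous operators, the σ-order-to-norm continuous operators, the order-to-weak continuous operators, and the σ-order-to-weak continuous operators. -/

import Mathlib

open Filter Set Topology Bornology

universe u

/-- `x_α ↓ 0`: the net `x` is decreasing with infimum `0`. -/
def DecreasesToZero {X : Type*} [Zero X] [PartialOrder X] {ι : Type*} [Preorder ι]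
    (x : ι → X) : Prop :=
  Antitone x ∧ IsGLB (Set.range x) 0

/-- `x_α →o 0`: order convergence of the net `x` to `0`, i.e. there is a net `g_β`,
indexed by a (nonempty) directed set, decreasing with infimum `0`, such that for each `β`
there is `α_β` with `±x_α ≤ g_β` for all `α ≥ α_β`. -/
def OrderConvZero {X : Type u} [Zero X] [Neg X] [PartialOrder X] {ι : Type*} [Preorder ι]
    (x : ι → X) : Prop :=
  ∃ (β : Type u) (pβ : Preorder β), Nonempty β ∧
    IsDirected β (fun b₁ b₂ => pβ.le b₁ b₂) ∧
    ∃ g : β → X, (∀ b₁ b₂ : β, pβ.le b₁ b₂ → g b₂ ≤ g b₁) ∧ IsGLB (Set.range g) 0 ∧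
      ∀ b : β, ∃ a₀ : ι, ∀ a : ι, a₀ ≤ a → -g b ≤ x a ∧ x a ≤ g b

/-- `x_α →r 0`: relative uniform convergence of the net `x` to `0`: for some `u ≥ 0`
there is an increasing sequence `(α_n)` of indices with `±x_α ≤ (1/n)u` for all `α ≥ α_n`. -/
def RuConvZero {X : Type*} [Zero X] [Neg X] [PartialOrder X] [SMul ℝ X] {ι : Type*} [Preorder ι]
    (x : ι → X) : Prop :=
  ∃ u : X, 0 ≤ u ∧ ∃ α : ℕ → ι, Monotone α ∧
    ∀ n : ℕ, 0 < n → ∀ a : ι, α n ≤ a → -((n : ℝ)⁻¹ • u) ≤ x a ∧ x a ≤ (n : ℝ)⁻¹ • u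

/-- The positive cone of an ordered TVS is normal: the topology has a base of neighborhoods
of `0` consisting of full sets. -/
def NormalConeTVS (Y : Type*) [Zero Y] [PartialOrder Y] [TopologicalSpace Y] : Prop :=
  ∀ U ∈ nhds (0 : Y), ∃ V ∈ nhds (0 : Y), V ⊆ U ∧
    ∀ a b x : Y, a ∈ V → b ∈ V → a ≤ x → x ≤ b → x ∈ V

section Statement15

variable {X Y : Type*} [NormedAddCommGroup X] [NormedSpace ℝ X] [PartialOrder X]
  [CovariantClass X X (· + ·) (· ≤ ·)] [PosSMulMono ℝ X] [CompleteSpace X]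
  [NormedAddCommGroup Y] [NormedSpace ℝ Y]

/-- Lebesgue operator: `‖T x_α‖ → 0` for every net `x_α ↓ 0`. -/
def LebesgueOp (T : X →ₗ[ℝ] Y) : Prop :=
  ∀ (ι : Type*) [Preorder ι] [Nonempty ι] [IsDirected ι (· ≤ ·)] (x : ι → X),
    DecreasesToZero x → Tendsto (fun a => ‖T (x a)‖) atTop (𝓝 0)

/-- σ-Lebesgue operator: `‖T x_n‖ → 0` for every sequence `x_n ↓ 0`. -/
def SigmaLebesgueOp (T : X →ₗ[ℝ] Y) : Prop :=
  ∀ x : ℕ → X, DecreasesToZero x → Tendsto (fun n => ‖T (x n)‖) atTop (𝓝 0)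

/-- w-Lebesgue operator: `f (T x_α) → 0` for every continuous linear functional `f` and
every net `x_α ↓ 0`. -/
def WLebesgueOp (T : X →ₗ[ℝ] Y) : Prop :=
  ∀ (ι : Type*) [Preorder ι] [Nonempty ι] [IsDirected ι (· ≤ ·)] (x : ι → X),
    DecreasesToZero x → ∀ f : Y →L[ℝ] ℝ, Tendsto (fun a => f (T (x a))) atTop (𝓝 0)

/-- σ-w-Lebesgue operator. -/
def SigmaWLebesgueOp (T : X →ₗ[ℝ] Y) : Prop :=
  ∀ x : ℕ → X, DecreasesToZero x →
    ∀ f : Y →L[ℝ] ℝ, Tendsto (fun n => f (T (x n))) atTop (𝓝 0)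

/-- Order-to-norm continuous operator: `‖T x_α‖ → 0` for every net `x_α →o 0`. -/
def OrderToNormContOp (T : X →ₗ[ℝ] Y) : Prop :=
  ∀ (ι : Type*) [Preorder ι] [Nonempty ι] [IsDirected ι (· ≤ ·)] (x : ι → X),
    OrderConvZero x → Tendsto (fun a => ‖T (x a)‖) atTop (𝓝 0)

/-- σ-order-to-norm continuous operator. -/
def SigmaOrderToNormContOp (T : X →ₗ[ℝ] Y) : Prop :=
  ∀ x : ℕ → X, OrderConvZero x → Tendsto (fun n => ‖T (x n)‖) atTop (𝓝 0)

/-- Order-to-weak continuous operator: `f (T x_α) → 0` for every continuous linear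
functional `f` and every net `x_α →o 0`. -/
def OrderToWeakContOp (T : X →ₗ[ℝ] Y) : Prop :=
  ∀ (ι : Type*) [Preorder ι] [Nonempty ι] [IsDirected ι (· ≤ ·)] (x : ι → X),
    OrderConvZero x → ∀ f : Y →L[ℝ] ℝ, Tendsto (fun a => f (T (x a))) atTop (𝓝 0)

/-- σ-order-to-weak continuous operator. -/
def SigmaOrderToWeakContOp (T : X →ₗ[ℝ] Y) : Prop :=
  ∀ x : ℕ → X, OrderConvZero x →
    ∀ f : Y →L[ℝ] ℝ, Tendsto (fun n => f (T (x n))) atTop (𝓝 0)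

/-- The class of linear operators satisfying `P` forms a subspace of the space `L(X,Y)` of
bounded operators, closed in the operator norm: every linear operator satisfying `P` is
continuous, and the corresponding set of continuous linear operators is a norm closed
linear subspace of `X →L[ℝ] Y`. -/
def IsClosedSubspaceOfBoundedOps (P : (X →ₗ[ℝ] Y) → Prop) : Prop :=
  (∀ T : X →ₗ[ℝ] Y, P T → Continuous T) ∧
  ∃ S : Submodule ℝ (X →L[ℝ] Y), IsClosed (S : Set (X →L[ℝ] Y)) ∧
    ∀ T : X →L[ℝ] Y, T ∈ S ↔ P (T : X →ₗ[ℝ] Y)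


/-! ### Auxiliary lemmas -/

section AuxLemmas

open scoped Pointwise

set_option linter.unusedSectionVars false

lemma aux_sum_nonneg (n : ℕ) (f : ℕ → X) (hf : ∀ i, 0 ≤ f i) :
    0 ≤ ∑ i ∈ Finset.range n, f i := by
  induction n with
  | zero => simp
  | succ n ih =>
    rw [Finset.sum_range_succ]
    calc (0:X) ≤ ∑ i ∈ Finset.range n, f i := ih
      _ = (∑ i ∈ Finset.range n, f i) + 0 := by rw [add_zero]
      _ ≤ (∑ i ∈ Finset.range n, f i) + f n := add_le_add_right (hf n) _

lemma aux_swap_add_le {u v : X} (w : X) (h : u ≤ v) : u + w ≤ v + w := by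
  rw [add_comm u w, add_comm v w]; exact add_le_add_right h w

/-- The open decomposition (Krein–Šmulian) theorem: small vectors lie in the closure of
differences of small positive vectors. -/
lemma aux_ball_subset_closure
    (hgen : ∀ x : X, ∃ a b : X, 0 ≤ a ∧ 0 ≤ b ∧ x = a - b) :
    ∃ ε : ℝ, 0 < ε ∧ ∀ x : X, ‖x‖ < ε →
      x ∈ closure {z : X | ∃ a b : X, 0 ≤ a ∧ 0 ≤ b ∧ ‖a‖ ≤ 1 ∧ ‖b‖ ≤ 1 ∧ z = a - b} := by
  set S : Set X := {z : X | ∃ a b : X, 0 ≤ a ∧ 0 ≤ b ∧ ‖a‖ ≤ 1 ∧ ‖b‖ ≤ 1 ∧ z = a - b} with hSdef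
  have hSconv : Convex ℝ S := by
    rintro z ⟨a, b, ha, hb, hna, hnb, rfl⟩ w ⟨a', b', ha', hb', hna', hnb', rfl⟩ s t hs ht hst
    refine ⟨s • a + t • a', s • b + t • b',
      add_nonneg (smul_nonneg hs ha) (smul_nonneg ht ha'),
      add_nonneg (smul_nonneg hs hb) (smul_nonneg ht hb'), ?_, ?_, ?_⟩
    · calc ‖s • a + t • a'‖ ≤ ‖s • a‖ + ‖t • a'‖ := norm_add_le _ _
        _ = s * ‖a‖ + t * ‖a'‖ := by
            rw [norm_smul, norm_smul, Real.norm_of_nonneg hs, Real.norm_of_nonneg ht]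
        _ ≤ s * 1 + t * 1 := by gcongr
        _ = 1 := by linarith
    · calc ‖s • b + t • b'‖ ≤ ‖s • b‖ + ‖t • b'‖ := norm_add_le _ _
        _ = s * ‖b‖ + t * ‖b'‖ := by
            rw [norm_smul, norm_smul, Real.norm_of_nonneg hs, Real.norm_of_nonneg ht]
        _ ≤ s * 1 + t * 1 := by gcongr
        _ = 1 := by linarith
    · rw [smul_sub, smul_sub]; abel
  -- Baire category argument
  have hcover : ∀ x : X, ∃ n : ℕ, x ∈ closure (((n : ℝ) + 1) • S) := by
    intro x
    obtain ⟨a, b, ha, hb, rfl⟩ := hgen x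
    set n : ℕ := ⌈max ‖a‖ ‖b‖⌉₊ with hn
    have hc : (0:ℝ) < (n : ℝ) + 1 := by positivity
    refine ⟨n, subset_closure ?_⟩
    rw [Set.mem_smul_set_iff_inv_smul_mem₀ hc.ne']
    refine ⟨((n : ℝ) + 1)⁻¹ • a, ((n : ℝ) + 1)⁻¹ • b,
      smul_nonneg (by positivity) ha, smul_nonneg (by positivity) hb, ?_, ?_, by rw [smul_sub]⟩
    · rw [norm_smul, Real.norm_of_nonneg (by positivity)]
      have h1 : ‖a‖ ≤ (n : ℝ) + 1 :=
        le_trans (le_trans (le_max_left _ _) (Nat.le_ceil _)) (by linarith)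
      calc ((n : ℝ) + 1)⁻¹ * ‖a‖ ≤ ((n : ℝ) + 1)⁻¹ * ((n : ℝ) + 1) := by gcongr
        _ = 1 := inv_mul_cancel₀ hc.ne'
    · rw [norm_smul, Real.norm_of_nonneg (by positivity)]
      have h1 : ‖b‖ ≤ (n : ℝ) + 1 :=
        le_trans (le_trans (le_max_right _ _) (Nat.le_ceil _)) (by linarith)
      calc ((n : ℝ) + 1)⁻¹ * ‖b‖ ≤ ((n : ℝ) + 1)⁻¹ * ((n : ℝ) + 1) := by gcongr
        _ = 1 := inv_mul_cancel₀ hc.ne'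
  obtain ⟨n, hne⟩ := nonempty_interior_of_iUnion_of_closed
    (f := fun n : ℕ => closure (((n : ℝ) + 1) • S)) (fun _ => isClosed_closure)
    (Set.eq_univ_iff_forall.2 fun x => Set.mem_iUnion.2 (hcover x))
  have hc0 : ((n : ℝ) + 1) ≠ 0 := by positivity
  rw [closure_smul₀' hc0, interior_smul₀ hc0] at hne
  obtain ⟨u, hu⟩ := smul_set_nonempty.mp hne
  obtain ⟨r, hr, hball⟩ := Metric.mem_nhds_iff.1 (mem_interior_iff_mem_nhds.1 hu)
  have hnegu : -u ∈ closure S := by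
    have hsub : Neg.neg '' S ⊆ S := by
      rintro _ ⟨z, ⟨a, b, ha, hb, hna, hnb, rfl⟩, rfl⟩
      exact ⟨b, a, hb, ha, hnb, hna, by abel⟩
    have h1 : -u ∈ Neg.neg '' closure S :=
      Set.mem_image_of_mem _ (interior_subset hu)
    have h2 := image_closure_subset_closure_image (f := Neg.neg) continuous_neg h1
    exact closure_mono hsub h2
  refine ⟨r / 2, by positivity, fun x hx => ?_⟩
  have h1 : u + (2:ℝ) • x ∈ closure S := by
    apply hball
    rw [Metric.mem_ball, dist_eq_norm]
    have : u + (2:ℝ) • x - u = (2:ℝ) • x := by abel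
    rw [this, norm_smul]
    simp only [Real.norm_ofNat]
    linarith
  have hx2 : x = (1/2 : ℝ) • (u + (2:ℝ) • x) + (1/2 : ℝ) • (-u) := by
    module
  rw [hx2]
  exact hSconv.closure h1 hnegu (by norm_num) (by norm_num) (by norm_num)

/-- Removing the closure by a geometric series argument. -/
lemma aux_decomp_small (hclosed : IsClosed {x : X | 0 ≤ x}) {ε : ℝ} (hε : 0 < ε)
    (hball : ∀ x : X, ‖x‖ < ε →
      x ∈ closure {z : X | ∃ a b : X, 0 ≤ a ∧ 0 ≤ b ∧ ‖a‖ ≤ 1 ∧ ‖b‖ ≤ 1 ∧ z = a - b})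
    (x : X) (hx : ‖x‖ < ε) :
    ∃ a b : X, 0 ≤ a ∧ 0 ≤ b ∧ ‖a‖ ≤ 2 ∧ ‖b‖ ≤ 2 ∧ x = a - b := by
  have step : ∀ y : X, ∃ a b r : X, 0 ≤ a ∧ 0 ≤ b ∧ ‖a‖ ≤ 1 ∧ ‖b‖ ≤ 1 ∧
      y = a - b + r ∧ (‖y‖ < ε → ‖r‖ < ε / 2) := by
    intro y
    by_cases hy : ‖y‖ < ε
    · have := hball y hy
      rcases Metric.mem_closure_iff.1 this (ε/2) (by positivity) with ⟨z, hzS, hdist⟩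
      obtain ⟨a, b, ha, hb, hna, hnb, rfl⟩ := hzS
      refine ⟨a, b, y - (a - b), ha, hb, hna, hnb, by abel, fun _ => ?_⟩
      rwa [← dist_eq_norm]
    · exact ⟨0, 0, y, le_refl _, le_refl _, by simp, by simp, by abel,
        fun h => absurd h hy⟩
  choose A B R hA hB hnA hnB hEq hR using step
  set rem : ℕ → X := fun n => Nat.rec x (fun k y => ((2:ℝ)^k)⁻¹ • R ((2:ℝ)^k • y)) n
    with hrem_def
  have rem_succ : ∀ n, rem (n+1) = ((2:ℝ)^n)⁻¹ • R ((2:ℝ)^n • rem n) := fun n => rfl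
  have hrem : ∀ n, ‖rem n‖ < ε * ((2:ℝ)^n)⁻¹ := by
    intro n
    induction n with
    | zero => show ‖x‖ < ε * ((2:ℝ)^0)⁻¹; simpa using hx
    | succ n ih =>
      have h2n : (0:ℝ) < (2:ℝ)^n := by positivity
      have hyn : ‖(2:ℝ)^n • rem n‖ < ε := by
        rw [norm_smul, Real.norm_of_nonneg h2n.le]
        calc (2:ℝ)^n * ‖rem n‖ < (2:ℝ)^n * (ε * ((2:ℝ)^n)⁻¹) := by
              exact (mul_lt_mul_iff_right₀ h2n).2 ih
          _ = ε := by field_simp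
      calc ‖rem (n+1)‖ = ((2:ℝ)^n)⁻¹ * ‖R ((2:ℝ)^n • rem n)‖ := by
            rw [rem_succ, norm_smul, Real.norm_of_nonneg (by positivity)]
        _ < ((2:ℝ)^n)⁻¹ * (ε/2) := by
            exact (mul_lt_mul_iff_right₀ (by positivity)).2 (hR _ hyn)
        _ = ε * ((2:ℝ)^(n+1))⁻¹ := by
            rw [pow_succ]; field_simp
  set aSeq : ℕ → X := fun n => ((2:ℝ)^n)⁻¹ • A ((2:ℝ)^n • rem n) with haSeq
  set bSeq : ℕ → X := fun n => ((2:ℝ)^n)⁻¹ • B ((2:ℝ)^n • rem n) with hbSeq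
  have haSeq_nonneg : ∀ n, 0 ≤ aSeq n := fun n =>
    smul_nonneg (by positivity) (hA _)
  have hbSeq_nonneg : ∀ n, 0 ≤ bSeq n := fun n =>
    smul_nonneg (by positivity) (hB _)
  have haSeq_norm : ∀ n, ‖aSeq n‖ ≤ ((1:ℝ)/2)^n := by
    intro n
    rw [haSeq, norm_smul, Real.norm_of_nonneg (by positivity)]
    calc ((2:ℝ)^n)⁻¹ * ‖A ((2:ℝ)^n • rem n)‖ ≤ ((2:ℝ)^n)⁻¹ * 1 := by
          exact mul_le_mul_of_nonneg_left (hnA _) (by positivity)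
      _ = ((1:ℝ)/2)^n := by rw [mul_one, one_div, inv_pow]
  have hbSeq_norm : ∀ n, ‖bSeq n‖ ≤ ((1:ℝ)/2)^n := by
    intro n
    rw [hbSeq, norm_smul, Real.norm_of_nonneg (by positivity)]
    calc ((2:ℝ)^n)⁻¹ * ‖B ((2:ℝ)^n • rem n)‖ ≤ ((2:ℝ)^n)⁻¹ * 1 := by
          exact mul_le_mul_of_nonneg_left (hnB _) (by positivity)
      _ = ((1:ℝ)/2)^n := by rw [mul_one, one_div, inv_pow]
  have hstep : ∀ n, rem n = aSeq n - bSeq n + rem (n+1) := by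
    intro n
    have h2n : ((2:ℝ)^n) ≠ 0 := by positivity
    have := hEq ((2:ℝ)^n • rem n)
    have h2 := congrArg (fun w => ((2:ℝ)^n)⁻¹ • w) this
    simp only [smul_add, smul_sub] at h2
    rw [inv_smul_smul₀ h2n] at h2
    rw [h2, rem_succ]
  have htel : ∀ n, x = (∑ k ∈ Finset.range n, (aSeq k - bSeq k)) + rem n := by
    intro n
    induction n with
    | zero => simp [hrem_def]
    | succ n ih =>
      rw [Finset.sum_range_succ]
      calc x = (∑ k ∈ Finset.range n, (aSeq k - bSeq k)) + rem n := ih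
        _ = (∑ k ∈ Finset.range n, (aSeq k - bSeq k)) + (aSeq n - bSeq n + rem (n+1)) := by
            rw [← hstep n]
        _ = (∑ k ∈ Finset.range n, (aSeq k - bSeq k)) + (aSeq n - bSeq n) + rem (n+1) := by
            abel
  have haSum : Summable aSeq :=
    Summable.of_norm_bounded summable_geometric_two haSeq_norm
  have hbSum : Summable bSeq :=
    Summable.of_norm_bounded summable_geometric_two hbSeq_norm
  have haNorm : Summable fun n => ‖aSeq n‖ :=
    Summable.of_nonneg_of_le (fun n => norm_nonneg _) haSeq_norm summable_geometric_two
  have hbNorm : Summable fun n => ‖bSeq n‖ :=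
    Summable.of_nonneg_of_le (fun n => norm_nonneg _) hbSeq_norm summable_geometric_two
  refine ⟨∑' n, aSeq n, ∑' n, bSeq n, ?_, ?_, ?_, ?_, ?_⟩
  · exact hclosed.mem_of_tendsto haSum.hasSum.tendsto_sum_nat
      (Filter.Eventually.of_forall fun n => by
        exact aux_sum_nonneg n aSeq haSeq_nonneg)
  · exact hclosed.mem_of_tendsto hbSum.hasSum.tendsto_sum_nat
      (Filter.Eventually.of_forall fun n => by
        exact aux_sum_nonneg n bSeq hbSeq_nonneg)
  · calc ‖∑' n, aSeq n‖ ≤ ∑' n, ‖aSeq n‖ :=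
        norm_tsum_le_tsum_norm haNorm
      _ ≤ ∑' n, ((1:ℝ)/2)^n :=
        Summable.tsum_le_tsum haSeq_norm haNorm summable_geometric_two
      _ = 2 := tsum_geometric_two
  · calc ‖∑' n, bSeq n‖ ≤ ∑' n, ‖bSeq n‖ :=
        norm_tsum_le_tsum_norm hbNorm
      _ ≤ ∑' n, ((1:ℝ)/2)^n :=
        Summable.tsum_le_tsum hbSeq_norm hbNorm summable_geometric_two
      _ = 2 := tsum_geometric_two
  · -- x = a - b
    have hrem0 : Tendsto rem atTop (𝓝 0) := by
      apply squeeze_zero_norm (fun n => (hrem n).le)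
      have : Tendsto (fun n : ℕ => ε * ((1:ℝ)/2)^n) atTop (𝓝 (ε * 0)) :=
        tendsto_const_nhds.mul
          (tendsto_pow_atTop_nhds_zero_of_lt_one (by norm_num) (by norm_num))
      simp only [mul_zero] at this
      convert this using 2 with n
      rw [one_div, inv_pow]
    have h1 : Tendsto (fun n => ∑ k ∈ Finset.range n, (aSeq k - bSeq k)) atTop
        (𝓝 ((∑' n, aSeq n) - ∑' n, bSeq n)) := by
      have := (haSum.hasSum.sub hbSum.hasSum).tendsto_sum_nat
      simpa [Finset.sum_sub_distrib] using this
    have h2 : Tendsto (fun n => ∑ k ∈ Finset.range n, (aSeq k - bSeq k)) atTop (𝓝 x) := by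
      have : (fun n => ∑ k ∈ Finset.range n, (aSeq k - bSeq k)) = fun n => x - rem n := by
        funext n
        have := htel n
        rw [this]; abel
      rw [this]
      simpa using tendsto_const_nhds.sub hrem0
    exact (tendsto_nhds_unique h2 h1)

/-- Full open decomposition with a uniform constant. -/
lemma aux_exists_decomp (hclosed : IsClosed {x : X | 0 ≤ x})
    (hgen : ∀ x : X, ∃ a b : X, 0 ≤ a ∧ 0 ≤ b ∧ x = a - b) :
    ∃ M : ℝ, 0 < M ∧ ∀ x : X, ∃ a b : X, 0 ≤ a ∧ 0 ≤ b ∧ x = a - b ∧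
      ‖a‖ ≤ M * ‖x‖ ∧ ‖b‖ ≤ M * ‖x‖ := by
  obtain ⟨ε, hε, hball⟩ := aux_ball_subset_closure hgen
  refine ⟨4 / ε + 1, by positivity, fun x => ?_⟩
  rcases eq_or_ne x 0 with rfl | hx
  · exact ⟨0, 0, le_refl _, le_refl _, by simp, by simp, by simp⟩
  · have hnx : 0 < ‖x‖ := norm_pos_iff.2 hx
    set c : ℝ := ε / (2 * ‖x‖) with hc
    have hc0 : 0 < c := by positivity
    have hsmall : ‖c • x‖ < ε := by
      rw [norm_smul, Real.norm_of_nonneg hc0.le, hc]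
      rw [div_mul_eq_mul_div, mul_comm]
      rw [div_lt_iff₀ (by positivity)]
      nlinarith
    obtain ⟨a, b, ha, hb, hna, hnb, heq⟩ := aux_decomp_small hclosed hε hball _ hsmall
    refine ⟨c⁻¹ • a, c⁻¹ • b, smul_nonneg (by positivity) ha,
      smul_nonneg (by positivity) hb, ?_, ?_, ?_⟩
    · have := congrArg (fun w => c⁻¹ • w) heq
      simp only [smul_sub] at this
      rw [inv_smul_smul₀ hc0.ne'] at this
      exact this
    · rw [norm_smul, Real.norm_of_nonneg (by positivity)]
      have hcinv : c⁻¹ = 2 * ‖x‖ / ε := by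
        rw [hc]; field_simp
      calc c⁻¹ * ‖a‖ ≤ c⁻¹ * 2 := by
            exact mul_le_mul_of_nonneg_left hna (by positivity)
        _ = 4 * ‖x‖ / ε := by rw [hcinv]; ring
        _ ≤ (4 / ε + 1) * ‖x‖ := by
            have h0 : 0 ≤ ‖x‖ := hnx.le
            have heq2 : (4 / ε + 1) * ‖x‖ = 4 * ‖x‖ / ε + ‖x‖ := by ring
            linarith
    · rw [norm_smul, Real.norm_of_nonneg (by positivity)]
      have hcinv : c⁻¹ = 2 * ‖x‖ / ε := by
        rw [hc]; field_simp
      calc c⁻¹ * ‖b‖ ≤ c⁻¹ * 2 := by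
            exact mul_le_mul_of_nonneg_left hnb (by positivity)
        _ = 4 * ‖x‖ / ε := by rw [hcinv]; ring
        _ ≤ (4 / ε + 1) * ‖x‖ := by
            have h0 : 0 ≤ ‖x‖ := hnx.le
            have heq2 : (4 / ε + 1) * ‖x‖ = 4 * ‖x‖ / ε + ‖x‖ := by ring
            linarith


/-- A `σ-w`-Lebesgue operator is bounded. -/
lemma aux_sigmaW_bounded (hclosed : IsClosed {x : X | 0 ≤ x})
    (hgen : ∀ x : X, ∃ a b : X, 0 ≤ a ∧ 0 ≤ b ∧ x = a - b)
    (T : X →ₗ[ℝ] Y) (hT : SigmaWLebesgueOp T) :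
    ∃ K : ℝ, 0 ≤ K ∧ ∀ x : X, ‖T x‖ ≤ K * ‖x‖ := by
  obtain ⟨M, hM, hdec⟩ := aux_exists_decomp hclosed hgen
  have hpos : ∃ K : ℝ, ∀ z : X, 0 ≤ z → ‖z‖ ≤ 1 → ‖T z‖ ≤ K := by
    by_contra hcon
    push_neg at hcon
    choose z hz1 hz2 hz3 using hcon
    set xs : ℕ → X := fun n => ((2:ℝ)^n)⁻¹ • z ((n : ℝ) * 2^n) with hxs
    have hxs_nonneg : ∀ n, 0 ≤ xs n := fun n => smul_nonneg (by positivity) (hz1 _)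
    have hxs_norm : ∀ n, ‖xs n‖ ≤ ((1:ℝ)/2)^n := by
      intro n
      rw [hxs, norm_smul, Real.norm_of_nonneg (by positivity)]
      calc ((2:ℝ)^n)⁻¹ * ‖z ((n : ℝ) * 2^n)‖ ≤ ((2:ℝ)^n)⁻¹ * 1 :=
          mul_le_mul_of_nonneg_left (hz2 _) (by positivity)
        _ = ((1:ℝ)/2)^n := by rw [mul_one, one_div, inv_pow]
    have hxs_T : ∀ n : ℕ, (n : ℝ) < ‖T (xs n)‖ := by
      intro n
      have h2n : (0:ℝ) < (2:ℝ)^n := by positivity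
      rw [hxs, map_smul, norm_smul, Real.norm_of_nonneg (by positivity)]
      have := hz3 ((n : ℝ) * 2^n)
      calc (n:ℝ) = ((2:ℝ)^n)⁻¹ * ((n:ℝ) * 2^n) := by field_simp
        _ < ((2:ℝ)^n)⁻¹ * ‖T (z ((n : ℝ) * 2^n))‖ :=
            (mul_lt_mul_iff_right₀ (by positivity)).2 this
    have hxsSum : Summable xs :=
      Summable.of_norm_bounded summable_geometric_two hxs_norm
    set ys : ℕ → X := fun n => ∑' k, xs (k + n) with hys
    have hys_eq : ∀ n, ys n = (∑' k, xs k) - ∑ i ∈ Finset.range n, xs i := by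
      intro n
      have := hxsSum.sum_add_tsum_nat_add n
      rw [hys]
      rw [eq_sub_iff_add_eq, add_comm]
      exact this
    have hys_succ : ∀ n, ys n = xs n + ys (n + 1) := by
      intro n
      rw [hys_eq, hys_eq, Finset.sum_range_succ]
      abel
    have hys_tail_sum : ∀ n, Summable fun k => xs (k + n) := fun n =>
      (summable_nat_add_iff n).2 hxsSum
    have hys_nonneg : ∀ n, 0 ≤ ys n := by
      intro n
      refine hclosed.mem_of_tendsto (hys_tail_sum n).hasSum.tendsto_sum_nat
        (Filter.Eventually.of_forall fun m => ?_)
      exact aux_sum_nonneg m _ (fun i => hxs_nonneg _)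
    have hys_anti : Antitone ys := by
      apply antitone_nat_of_succ_le
      intro n
      rw [hys_succ n]
      calc ys (n+1) = 0 + ys (n+1) := by rw [zero_add]
        _ ≤ xs n + ys (n+1) := aux_swap_add_le _ (hxs_nonneg n)
    have hys_tendsto : Tendsto ys atTop (𝓝 0) := by
      have h1 : Tendsto (fun n => ∑ i ∈ Finset.range n, xs i) atTop (𝓝 (∑' k, xs k)) :=
        hxsSum.hasSum.tendsto_sum_nat
      have h2 : Tendsto (fun n => (∑' k, xs k) - ∑ i ∈ Finset.range n, xs i) atTop
          (𝓝 ((∑' k, xs k) - ∑' k, xs k)) := tendsto_const_nhds.sub h1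
      rw [sub_self] at h2
      convert h2 using 2 with n
      exact hys_eq n
    have hys_glb : IsGLB (Set.range ys) 0 := by
      constructor
      · rintro w ⟨n, rfl⟩
        exact hys_nonneg n
      · intro w hw
        have hw' : ∀ n, w ≤ ys n := fun n => hw ⟨n, rfl⟩
        have h1 : Tendsto (fun n => ys n - w) atTop (𝓝 (0 - w)) :=
          hys_tendsto.sub tendsto_const_nhds
        have h2 : (0 : X) - w ∈ {x : X | 0 ≤ x} :=
          hclosed.mem_of_tendsto h1 (Filter.Eventually.of_forall fun n =>
            show (0:X) ≤ ys n - w from sub_nonneg.2 (hw' n))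
        have : (0:X) ≤ 0 - w := h2
        rw [zero_sub] at this
        exact (neg_nonneg.1 this)
    have hdecz : DecreasesToZero ys := ⟨hys_anti, hys_glb⟩
    have hweak : ∀ f : Y →L[ℝ] ℝ, Tendsto (fun n => f (T (xs n))) atTop (𝓝 0) := by
      intro f
      have h1 := hT ys hdecz f
      have h2 : Tendsto (fun n => f (T (ys (n + 1)))) atTop (𝓝 0) :=
        h1.comp (tendsto_add_atTop_nat 1)
      have h3 : Tendsto (fun n => f (T (ys n)) - f (T (ys (n + 1)))) atTop (𝓝 (0 - 0)) :=
        h1.sub h2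
      rw [sub_zero] at h3
      convert h3 using 2 with n
      have : xs n = ys n - ys (n + 1) := by rw [hys_succ n]; abel
      rw [this, map_sub, map_sub]
    have hptwise : ∀ f : Y →L[ℝ] ℝ, ∃ C : ℝ, ∀ n,
        ‖(NormedSpace.inclusionInDoubleDualLi ℝ (E := Y)) (T (xs n)) f‖ ≤ C := by
      intro f
      have h1 : Tendsto (fun n => ‖f (T (xs n))‖) atTop (𝓝 0) := by
        simpa using (hweak f).norm
      have h2 : BddAbove (Set.range fun n => ‖f (T (xs n))‖) :=
        h1.bddAbove_range
      obtain ⟨C, hC⟩ := h2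
      exact ⟨C, fun n => hC ⟨n, rfl⟩⟩
    obtain ⟨C', hC'⟩ := banach_steinhaus
      (g := fun n => (NormedSpace.inclusionInDoubleDualLi ℝ (E := Y)) (T (xs n))) hptwise
    set n₀ : ℕ := ⌈max C' 0⌉₊ + 1 with hn₀
    have hlt : C' < (n₀ : ℝ) := by
      have h1 : C' ≤ max C' 0 := le_max_left _ _
      have h2 : max C' 0 ≤ (⌈max C' 0⌉₊ : ℝ) := Nat.le_ceil _
      have : ((⌈max C' 0⌉₊ : ℝ)) < (n₀ : ℝ) := by
        rw [hn₀]; push_cast; linarith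
      linarith
    have hnorm_eq : ‖(NormedSpace.inclusionInDoubleDualLi ℝ (E := Y)) (T (xs n₀))‖
        = ‖T (xs n₀)‖ := (NormedSpace.inclusionInDoubleDualLi ℝ (E := Y)).norm_map _
    have : (n₀ : ℝ) < ‖T (xs n₀)‖ := hxs_T n₀
    have hle := hC' n₀
    rw [hnorm_eq] at hle
    linarith
  obtain ⟨K, hK⟩ := hpos
  have hK0 : 0 ≤ K := by
    have := hK 0 (le_refl _) (by simp)
    simpa using this
  have hcone : ∀ a : X, 0 ≤ a → ‖T a‖ ≤ K * ‖a‖ := by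
    intro a ha
    rcases eq_or_ne a 0 with rfl | h
    · simp
    · have hna : 0 < ‖a‖ := norm_pos_iff.2 h
      have h1 := hK (‖a‖⁻¹ • a) (smul_nonneg (by positivity) ha)
        (by rw [norm_smul, Real.norm_of_nonneg (by positivity)]
            rw [inv_mul_cancel₀ hna.ne'])
      rw [map_smul, norm_smul, Real.norm_of_nonneg (by positivity)] at h1
      calc ‖T a‖ = ‖a‖ * (‖a‖⁻¹ * ‖T a‖) := by field_simp
        _ ≤ ‖a‖ * K := mul_le_mul_of_nonneg_left h1 hna.le
        _ = K * ‖a‖ := mul_comm _ _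
  refine ⟨2 * K * M, by positivity, fun x => ?_⟩
  obtain ⟨a, b, ha, hb, hxab, hnam, hnbm⟩ := hdec x
  calc ‖T x‖ = ‖T a - T b‖ := by rw [hxab, map_sub]
    _ ≤ ‖T a‖ + ‖T b‖ := norm_sub_le _ _
    _ ≤ K * ‖a‖ + K * ‖b‖ := add_le_add (hcone a ha) (hcone b hb)
    _ ≤ K * (M * ‖x‖) + K * (M * ‖x‖) :=
        add_le_add (mul_le_mul_of_nonneg_left hnam hK0)
          (mul_le_mul_of_nonneg_left hnbm hK0)
    _ = 2 * K * M * ‖x‖ := by ring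

/-- Transporting a decreasing sequence along `ULift.down`. -/
lemma aux_dec_comp_down {x : ℕ → X} (hx : DecreasesToZero x) :
    DecreasesToZero (fun a : ULift.{u'} ℕ => x a.down) := by
  refine ⟨fun a b h => hx.1 h, ?_⟩
  have : Set.range (fun a : ULift.{u'} ℕ => x a.down) = Set.range x := by
    ext w
    constructor
    · rintro ⟨b, rfl⟩; exact ⟨b.down, rfl⟩
    · rintro ⟨n, rfl⟩; exact ⟨ULift.up n, rfl⟩
  rw [this]
  exact hx.2

lemma aux_oc_comp_down {x : ℕ → X} (hx : OrderConvZero x) :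
    OrderConvZero (fun a : ULift.{u'} ℕ => x a.down) := by
  obtain ⟨β, pβ, hne, hdir, g, h1, h2, h3⟩ := hx
  refine ⟨β, pβ, hne, hdir, g, h1, h2, fun b => ?_⟩
  obtain ⟨a₀, ha₀⟩ := h3 b
  exact ⟨ULift.up a₀, fun a ha => ha₀ a.down ha⟩

lemma aux_up_tendsto : Tendsto (ULift.up.{u'} : ℕ → ULift.{u'} ℕ) atTop atTop :=
  Filter.tendsto_atTop_atTop.2 fun b => ⟨b.down, fun a ha => ha⟩

/-- A decreasing sequence order converges to zero. -/
lemma aux_dec_oc {x : ℕ → X} (hx : DecreasesToZero x) : OrderConvZero x := by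
  obtain ⟨hmono, hglb⟩ := hx
  have hnonneg : ∀ n, 0 ≤ x n := fun n => hglb.1 ⟨n, rfl⟩
  refine ⟨ULift ℕ, inferInstance, ⟨ULift.up 0⟩,
    ⟨fun a b => ⟨ULift.up (max a.down b.down), le_max_left _ _, le_max_right _ _⟩⟩,
    fun b => x b.down, fun b₁ b₂ h => hmono h, ?_, fun b => ⟨b.down, fun a hab =>
      ⟨le_trans (neg_nonpos.2 (hnonneg b.down)) (hnonneg a), hmono hab⟩⟩⟩
  have : Set.range (fun b : ULift ℕ => x b.down) = Set.range x := by
    ext w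
    constructor
    · rintro ⟨b, rfl⟩; exact ⟨b.down, rfl⟩
    · rintro ⟨n, rfl⟩; exact ⟨ULift.up n, rfl⟩
  rw [this]
  exact hglb

/-- Eventual norm bound for a decreasing net (normal cone). -/
lemma aux_bound_dec {ι : Type*} [Preorder ι] [Nonempty ι] [IsDirected ι (· ≤ ·)]
    (hnormal : ∃ C : ℝ, 0 < C ∧ ∀ x y : X, 0 ≤ x → x ≤ y → ‖x‖ ≤ C * ‖y‖)
    {x : ι → X} (hx : DecreasesToZero x) :
    ∃ B : ℝ, ∀ᶠ a in atTop, ‖x a‖ ≤ B := by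
  obtain ⟨C, hC, hN⟩ := hnormal
  obtain ⟨a₀⟩ := ‹Nonempty ι›
  exact ⟨C * ‖x a₀‖, Filter.eventually_atTop.2
    ⟨a₀, fun a ha => hN _ _ (hx.2.1 ⟨a, rfl⟩) (hx.1 ha)⟩⟩

/-- Eventual norm bound for an order null net (normal cone). -/
lemma aux_bound_oc {ι : Type*} [Preorder ι] [Nonempty ι] [IsDirected ι (· ≤ ·)]
    (hnormal : ∃ C : ℝ, 0 < C ∧ ∀ x y : X, 0 ≤ x → x ≤ y → ‖x‖ ≤ C * ‖y‖)
    {x : ι → X} (hx : OrderConvZero x) :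
    ∃ B : ℝ, ∀ᶠ a in atTop, ‖x a‖ ≤ B := by
  obtain ⟨C, hC, hN⟩ := hnormal
  obtain ⟨β, pβ, hne, hdir, g, hganti, hglb, hdom⟩ := hx
  obtain ⟨b₀⟩ := hne
  obtain ⟨a₀, ha₀⟩ := hdom b₀
  refine ⟨C * ‖g b₀ + g b₀‖ + ‖g b₀‖, Filter.eventually_atTop.2 ⟨a₀, fun a ha => ?_⟩⟩
  obtain ⟨h1, h2⟩ := ha₀ a ha
  have h3 : (0:X) ≤ x a + g b₀ := by
    have := aux_swap_add_le (g b₀) h1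
    rwa [neg_add_cancel] at this
  have h4 : x a + g b₀ ≤ g b₀ + g b₀ := aux_swap_add_le _ h2
  have h5 : ‖x a + g b₀‖ ≤ C * ‖g b₀ + g b₀‖ := hN _ _ h3 h4
  calc ‖x a‖ = ‖(x a + g b₀) + (-(g b₀))‖ := by rw [add_neg_cancel_right]
    _ ≤ ‖x a + g b₀‖ + ‖-(g b₀)‖ := norm_add_le _ _
    _ = ‖x a + g b₀‖ + ‖g b₀‖ := by rw [norm_neg]
    _ ≤ C * ‖g b₀ + g b₀‖ + ‖g b₀‖ := by linarith

/-- Key approximation lemma: a norm limit of operators killing a given net also kills it. -/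
lemma aux_key_limit {ι : Type*} [Preorder ι] {Z : Type*} [NormedAddCommGroup Z]
    [NormedSpace ℝ Z] {x : ι → X} {B : ℝ} (hB : ∀ᶠ a in atTop, ‖x a‖ ≤ B)
    {φ : X →L[ℝ] Z} {F : ℕ → X →L[ℝ] Z} (hF : Tendsto F atTop (𝓝 φ))
    (h : ∀ k, Tendsto (fun a => ‖F k (x a)‖) atTop (𝓝 0)) :
    Tendsto (fun a => ‖φ (x a)‖) atTop (𝓝 0) := by
  have main : Tendsto (fun a => φ (x a)) atTop (𝓝 0) := by
    rw [NormedAddCommGroup.tendsto_nhds_zero]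
    intro ε hε
    set B' : ℝ := |B| + 1 with hB'def
    have hB'pos : 0 < B' := by positivity
    have hB' : ∀ᶠ a in atTop, ‖x a‖ ≤ B' :=
      hB.mono fun a ha => le_trans ha (le_trans (le_abs_self B) (by rw [hB'def]; linarith))
    have hδ : 0 < ε / (2 * B') := by positivity
    obtain ⟨k, hk⟩ : ∃ k, ‖F k - φ‖ < ε / (2 * B') := by
      rcases Metric.tendsto_atTop.1 hF _ hδ with ⟨k, hk⟩
      have := hk k le_rfl
      rw [dist_eq_norm] at this
      exact ⟨k, this⟩
    have h2 : ∀ᶠ a in atTop, ‖F k (x a)‖ < ε / 2 :=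
      (h k).eventually_lt_const (by positivity)
    filter_upwards [hB', h2] with a ha hfa
    have hsplit : φ (x a) = (φ - F k) (x a) + F k (x a) := by simp
    have hb1 : ‖(φ - F k) (x a)‖ ≤ ‖φ - F k‖ * ‖x a‖ := (φ - F k).le_opNorm _
    have hb2 : ‖φ - F k‖ ≤ ε / (2 * B') := by
      rw [norm_sub_rev]; exact hk.le
    have hb3 : ‖φ - F k‖ * ‖x a‖ ≤ (ε / (2 * B')) * B' :=
      mul_le_mul hb2 ha (norm_nonneg _) hδ.le
    have hb4 : (ε / (2 * B')) * B' = ε / 2 := by field_simp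
    calc ‖φ (x a)‖ ≤ ‖(φ - F k) (x a)‖ + ‖F k (x a)‖ := by
          rw [hsplit]; exact norm_add_le _ _
      _ ≤ ε / 2 + ‖F k (x a)‖ := by
          have := le_trans hb1 hb3
          rw [hb4] at this
          linarith
      _ < ε / 2 + ε / 2 := by linarith
      _ = ε := by ring
  simpa using main.norm

lemma aux_tendsto_norm_add {ι : Type*} {l : Filter ι} {Z : Type*} [NormedAddCommGroup Z]
    {f g : ι → Z} (hf : Tendsto (fun a => ‖f a‖) l (𝓝 0))
    (hg : Tendsto (fun a => ‖g a‖) l (𝓝 0)) :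
    Tendsto (fun a => ‖f a + g a‖) l (𝓝 0) := by
  apply squeeze_zero (fun a => norm_nonneg _) (fun a => norm_add_le _ _)
  simpa using hf.add hg

lemma aux_tendsto_norm_smul {ι : Type*} {l : Filter ι} {Z : Type*} [NormedAddCommGroup Z]
    [NormedSpace ℝ Z] (c : ℝ) {f : ι → Z} (hf : Tendsto (fun a => ‖f a‖) l (𝓝 0)) :
    Tendsto (fun a => ‖c • f a‖) l (𝓝 0) := by
  simp only [norm_smul]
  simpa using hf.const_mul ‖c‖

/-- Generic builder for `IsClosedSubspaceOfBoundedOps`. -/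
lemma aux_build (P : (X →ₗ[ℝ] Y) → Prop)
    (hcont : ∀ T : X →ₗ[ℝ] Y, P T → Continuous T)
    (h0 : P (0 : X →ₗ[ℝ] Y))
    (hadd : ∀ T S : X →L[ℝ] Y, P (T : X →ₗ[ℝ] Y) → P (S : X →ₗ[ℝ] Y) →
      P ((T + S : X →L[ℝ] Y) : X →ₗ[ℝ] Y))
    (hsmul : ∀ (c : ℝ) (T : X →L[ℝ] Y), P (T : X →ₗ[ℝ] Y) →
      P ((c • T : X →L[ℝ] Y) : X →ₗ[ℝ] Y))
    (hcl : ∀ (F : ℕ → X →L[ℝ] Y) (T : X →L[ℝ] Y), (∀ k, P ((F k : X →L[ℝ] Y) : X →ₗ[ℝ] Y)) →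
      Tendsto F atTop (𝓝 T) → P (T : X →ₗ[ℝ] Y)) :
    IsClosedSubspaceOfBoundedOps P := by
  refine ⟨hcont, ?_⟩
  refine ⟨{ carrier := {T : X →L[ℝ] Y | P (T : X →ₗ[ℝ] Y)}
            add_mem' := fun {T S} hT hS => hadd T S hT hS
            zero_mem' := by
              show P ((0 : X →L[ℝ] Y) : X →ₗ[ℝ] Y)
              rw [ContinuousLinearMap.coe_zero]
              exact h0
            smul_mem' := fun c T hT => hsmul c T hT }, ?_, fun T => Iff.rfl⟩
  exact IsSeqClosed.isClosed fun F T hF hFT => hcl F T hF hFT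


instance aux_ulift_directed : IsDirected (ULift.{u'} ℕ) (· ≤ ·) :=
  ⟨fun a b => ⟨ULift.up (max a.down b.down),
    show a.down ≤ max a.down b.down from le_max_left _ _,
    show b.down ≤ max a.down b.down from le_max_right _ _⟩⟩

lemma aux_leb_sigma {T : X →ₗ[ℝ] Y} (h : LebesgueOp T) : SigmaLebesgueOp T := by
  intro x hx
  exact (h (ULift ℕ) (fun a => x a.down) (aux_dec_comp_down hx)).comp aux_up_tendsto

lemma aux_w_sigma {T : X →ₗ[ℝ] Y} (h : WLebesgueOp T) : SigmaWLebesgueOp T := by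
  intro x hx f
  exact (h (ULift ℕ) (fun a => x a.down) (aux_dec_comp_down hx) f).comp aux_up_tendsto

lemma aux_on_sigma {T : X →ₗ[ℝ] Y} (h : OrderToNormContOp T) : SigmaOrderToNormContOp T := by
  intro x hx
  exact (h (ULift ℕ) (fun a => x a.down) (aux_oc_comp_down hx)).comp aux_up_tendsto

lemma aux_ow_sigma {T : X →ₗ[ℝ] Y} (h : OrderToWeakContOp T) : SigmaOrderToWeakContOp T := by
  intro x hx f
  exact (h (ULift ℕ) (fun a => x a.down) (aux_oc_comp_down hx) f).comp aux_up_tendsto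

lemma aux_son_sleb {T : X →ₗ[ℝ] Y} (h : SigmaOrderToNormContOp T) : SigmaLebesgueOp T :=
  fun x hx => h x (aux_dec_oc hx)

lemma aux_sow_sw {T : X →ₗ[ℝ] Y} (h : SigmaOrderToWeakContOp T) : SigmaWLebesgueOp T :=
  fun x hx f => h x (aux_dec_oc hx) f

lemma aux_sleb_sw {T : X →ₗ[ℝ] Y} (h : SigmaLebesgueOp T) : SigmaWLebesgueOp T := by
  intro x hx f
  apply squeeze_zero_norm (a := fun n => ‖f‖ * ‖T (x n)‖) (fun n => f.le_opNorm (T (x n)))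
  simpa using (h x hx).const_mul ‖f‖

lemma aux_cont_of_sigmaW (hclosed : IsClosed {x : X | 0 ≤ x})
    (hgen : ∀ x : X, ∃ a b : X, 0 ≤ a ∧ 0 ≤ b ∧ x = a - b)
    {T : X →ₗ[ℝ] Y} (hT : SigmaWLebesgueOp T) : Continuous T := by
  obtain ⟨K, _, hK⟩ := aux_sigmaW_bounded hclosed hgen T hT
  exact AddMonoidHomClass.continuous_of_bound T K hK

end AuxLemmas

/-- if `X` is an ordered Banach space with a closed generating normal cone
and `Y` is a normed space, then the Lebesgue, σ-Lebesgue, w-Lebesgue, σ-w-Lebesgue,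
order-to-norm continuous, σ-order-to-norm continuous, order-to-weak continuous and
σ-order-to-weak continuous operators all form norm closed subspaces of `L(X,Y)`. -/
theorem lebesgue_classes_closed_subspaces
    (hclosed : IsClosed {x : X | 0 ≤ x})
    (hgen : ∀ x : X, ∃ a b : X, 0 ≤ a ∧ 0 ≤ b ∧ x = a - b)
    (hnormal : ∃ C : ℝ, 0 < C ∧ ∀ x y : X, 0 ≤ x → x ≤ y → ‖x‖ ≤ C * ‖y‖) :
    IsClosedSubspaceOfBoundedOps (X := X) (Y := Y) (fun T => LebesgueOp T) ∧
    IsClosedSubspaceOfBoundedOps (X := X) (Y := Y) (fun T => SigmaLebesgueOp T) ∧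
    IsClosedSubspaceOfBoundedOps (X := X) (Y := Y) (fun T => WLebesgueOp T) ∧
    IsClosedSubspaceOfBoundedOps (X := X) (Y := Y) (fun T => SigmaWLebesgueOp T) ∧
    IsClosedSubspaceOfBoundedOps (X := X) (Y := Y) (fun T => OrderToNormContOp T) ∧
    IsClosedSubspaceOfBoundedOps (X := X) (Y := Y) (fun T => SigmaOrderToNormContOp T) ∧
    IsClosedSubspaceOfBoundedOps (X := X) (Y := Y) (fun T => OrderToWeakContOp T) ∧
    IsClosedSubspaceOfBoundedOps (X := X) (Y := Y) (fun T => SigmaOrderToWeakContOp T) := by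
  have hcontW : ∀ T : X →ₗ[ℝ] Y, SigmaWLebesgueOp T → Continuous T :=
    fun T hT => aux_cont_of_sigmaW hclosed hgen hT
  refine ⟨?_, ?_, ?_, ?_, ?_, ?_, ?_, ?_⟩
  · -- Lebesgue
    refine aux_build _ (fun T hT => hcontW T (aux_sleb_sw (aux_leb_sigma hT))) ?_ ?_ ?_ ?_
    · intro ι _ _ _ x hx
      simp only [LinearMap.zero_apply, norm_zero]
      exact tendsto_const_nhds
    · intro T S hT hS ι _ _ _ x hx
      simp only [ContinuousLinearMap.coe_add, LinearMap.add_apply]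
      exact aux_tendsto_norm_add (hT ι x hx) (hS ι x hx)
    · intro c T hT ι _ _ _ x hx
      simp only [ContinuousLinearMap.coe_smul, LinearMap.smul_apply]
      exact aux_tendsto_norm_smul c (hT ι x hx)
    · intro F T hFk hFT ι _ _ _ x hx
      obtain ⟨B, hB⟩ := aux_bound_dec hnormal hx
      exact aux_key_limit hB hFT fun k => hFk k ι x hx
  · -- σ-Lebesgue
    refine aux_build _ (fun T hT => hcontW T (aux_sleb_sw hT)) ?_ ?_ ?_ ?_
    · intro x hx
      simp only [LinearMap.zero_apply, norm_zero]
      exact tendsto_const_nhds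
    · intro T S hT hS x hx
      simp only [ContinuousLinearMap.coe_add, LinearMap.add_apply]
      exact aux_tendsto_norm_add (hT x hx) (hS x hx)
    · intro c T hT x hx
      simp only [ContinuousLinearMap.coe_smul, LinearMap.smul_apply]
      exact aux_tendsto_norm_smul c (hT x hx)
    · intro F T hFk hFT x hx
      obtain ⟨B, hB⟩ := aux_bound_dec hnormal hx
      exact aux_key_limit hB hFT fun k => hFk k x hx
  · -- w-Lebesgue
    refine aux_build _ (fun T hT => hcontW T (aux_w_sigma hT)) ?_ ?_ ?_ ?_
    · intro ι _ _ _ x hx f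
      simp only [LinearMap.zero_apply, map_zero]
      exact tendsto_const_nhds
    · intro T S hT hS ι _ _ _ x hx f
      simp only [ContinuousLinearMap.coe_add, LinearMap.add_apply, map_add]
      simpa using (hT ι x hx f).add (hS ι x hx f)
    · intro c T hT ι _ _ _ x hx f
      simp only [ContinuousLinearMap.coe_smul, LinearMap.smul_apply, map_smul, smul_eq_mul]
      simpa using (hT ι x hx f).const_mul c
    · intro F T hFk hFT ι _ _ _ x hx f
      obtain ⟨B, hB⟩ := aux_bound_dec hnormal hx
      have hkey := aux_key_limit
        (φ := (ContinuousLinearMap.compSL X Y ℝ (RingHom.id ℝ) (RingHom.id ℝ) f) T)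
        (F := fun k => (ContinuousLinearMap.compSL X Y ℝ (RingHom.id ℝ) (RingHom.id ℝ) f) (F k))
        hB
        (((ContinuousLinearMap.compSL X Y ℝ (RingHom.id ℝ)
          (RingHom.id ℝ) f).continuous.tendsto T).comp hFT)
        (fun k => by
          simpa [ContinuousLinearMap.compSL_apply, ContinuousLinearMap.comp_apply]
            using (hFk k ι x hx f).norm)
      exact squeeze_zero_norm (fun a => le_rfl) hkey
  · -- σ-w-Lebesgue
    refine aux_build _ (fun T hT => hcontW T hT) ?_ ?_ ?_ ?_
    · intro x hx f
      simp only [LinearMap.zero_apply, map_zero]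
      exact tendsto_const_nhds
    · intro T S hT hS x hx f
      simp only [ContinuousLinearMap.coe_add, LinearMap.add_apply, map_add]
      simpa using (hT x hx f).add (hS x hx f)
    · intro c T hT x hx f
      simp only [ContinuousLinearMap.coe_smul, LinearMap.smul_apply, map_smul, smul_eq_mul]
      simpa using (hT x hx f).const_mul c
    · intro F T hFk hFT x hx f
      obtain ⟨B, hB⟩ := aux_bound_dec hnormal hx
      have hkey := aux_key_limit
        (φ := (ContinuousLinearMap.compSL X Y ℝ (RingHom.id ℝ) (RingHom.id ℝ) f) T)
        (F := fun k => (ContinuousLinearMap.compSL X Y ℝ (RingHom.id ℝ) (RingHom.id ℝ) f) (F k))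
        hB
        (((ContinuousLinearMap.compSL X Y ℝ (RingHom.id ℝ)
          (RingHom.id ℝ) f).continuous.tendsto T).comp hFT)
        (fun k => by
          simpa [ContinuousLinearMap.compSL_apply, ContinuousLinearMap.comp_apply]
            using (hFk k x hx f).norm)
      exact squeeze_zero_norm (fun a => le_rfl) hkey
  · -- order-to-norm
    refine aux_build _
      (fun T hT => hcontW T (aux_sleb_sw (aux_son_sleb (aux_on_sigma hT)))) ?_ ?_ ?_ ?_
    · intro ι _ _ _ x hx
      simp only [LinearMap.zero_apply, norm_zero]
      exact tendsto_const_nhds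
    · intro T S hT hS ι _ _ _ x hx
      simp only [ContinuousLinearMap.coe_add, LinearMap.add_apply]
      exact aux_tendsto_norm_add (hT ι x hx) (hS ι x hx)
    · intro c T hT ι _ _ _ x hx
      simp only [ContinuousLinearMap.coe_smul, LinearMap.smul_apply]
      exact aux_tendsto_norm_smul c (hT ι x hx)
    · intro F T hFk hFT ι _ _ _ x hx
      obtain ⟨B, hB⟩ := aux_bound_oc hnormal hx
      exact aux_key_limit hB hFT fun k => hFk k ι x hx
  · -- σ-order-to-norm
    refine aux_build _
      (fun T hT => hcontW T (aux_sleb_sw (aux_son_sleb hT))) ?_ ?_ ?_ ?_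
    · intro x hx
      simp only [LinearMap.zero_apply, norm_zero]
      exact tendsto_const_nhds
    · intro T S hT hS x hx
      simp only [ContinuousLinearMap.coe_add, LinearMap.add_apply]
      exact aux_tendsto_norm_add (hT x hx) (hS x hx)
    · intro c T hT x hx
      simp only [ContinuousLinearMap.coe_smul, LinearMap.smul_apply]
      exact aux_tendsto_norm_smul c (hT x hx)
    · intro F T hFk hFT x hx
      obtain ⟨B, hB⟩ := aux_bound_oc hnormal hx
      exact aux_key_limit hB hFT fun k => hFk k x hx
  · -- order-to-weak
    refine aux_build _
      (fun T hT => hcontW T (aux_sow_sw (aux_ow_sigma hT))) ?_ ?_ ?_ ?_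
    · intro ι _ _ _ x hx f
      simp only [LinearMap.zero_apply, map_zero]
      exact tendsto_const_nhds
    · intro T S hT hS ι _ _ _ x hx f
      simp only [ContinuousLinearMap.coe_add, LinearMap.add_apply, map_add]
      simpa using (hT ι x hx f).add (hS ι x hx f)
    · intro c T hT ι _ _ _ x hx f
      simp only [ContinuousLinearMap.coe_smul, LinearMap.smul_apply, map_smul, smul_eq_mul]
      simpa using (hT ι x hx f).const_mul c
    · intro F T hFk hFT ι _ _ _ x hx f
      obtain ⟨B, hB⟩ := aux_bound_oc hnormal hx
      have hkey := aux_key_limit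
        (φ := (ContinuousLinearMap.compSL X Y ℝ (RingHom.id ℝ) (RingHom.id ℝ) f) T)
        (F := fun k => (ContinuousLinearMap.compSL X Y ℝ (RingHom.id ℝ) (RingHom.id ℝ) f) (F k))
        hB
        (((ContinuousLinearMap.compSL X Y ℝ (RingHom.id ℝ)
          (RingHom.id ℝ) f).continuous.tendsto T).comp hFT)
        (fun k => by
          simpa [ContinuousLinearMap.compSL_apply, ContinuousLinearMap.comp_apply]
            using (hFk k ι x hx f).norm)
      exact squeeze_zero_norm (fun a => le_rfl) hkey
  · -- σ-order-to-weak
    refine aux_build _ (fun T hT => hcontW T (aux_sow_sw hT)) ?_ ?_ ?_ ?_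
    · intro x hx f
      simp only [LinearMap.zero_apply, map_zero]
      exact tendsto_const_nhds
    · intro T S hT hS x hx f
      simp only [ContinuousLinearMap.coe_add, LinearMap.add_apply, map_add]
      simpa using (hT x hx f).add (hS x hx f)
    · intro c T hT x hx f
      simp only [ContinuousLinearMap.coe_smul, LinearMap.smul_apply, map_smul, smul_eq_mul]
      simpa using (hT x hx f).const_mul c
    · intro F T hFk hFT x hx f
      obtain ⟨B, hB⟩ := aux_bound_oc hnormal hx
      have hkey := aux_key_limit
        (φ := (ContinuousLinearMap.compSL X Y ℝ (RingHom.id ℝ) (RingHom.id ℝ) f) T)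
        (F := fun k => (ContinuousLinearMap.compSL X Y ℝ (RingHom.id ℝ) (RingHom.id ℝ) f) (F k))
        hB
        (((ContinuousLinearMap.compSL X Y ℝ (RingHom.id ℝ)
          (RingHom.id ℝ) f).continuous.tendsto T).comp hFT)
        (fun k => by
          simpa [ContinuousLinearMap.compSL_apply, ContinuousLinearMap.comp_apply]
            using (hFk k x hx f).norm)
      exact squeeze_zero_norm (fun a => le_rfl) hkey


end Statement15
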